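/- For two partial isometries u, v in a C*-algebra, u*v = uv* = 0 if and only if u + λv is a partial isometry for every complex scalar λ with |λ| = 1. -/

import Mathlib

open Complex

/-- Two partial isometries `u, v` in a C*-algebra are orthogonal
(`u*v = uv* = 0`) iff `u + λv` is a partial isometry for every unimodular `λ`. -/
theorem orthogonal_iff_sum_partialIsometry
    {A : Type*} [NormedRing A] [StarRing A] [CStarRing A]
    [NormedAlgebra ℂ A] [StarModule ℂ A] [CompleteSpace A]
    (u v : A) (hu : u * star u * u = u) (hv : v * star v * v = v) :
    (star u * v = 0 ∧ u * star v = 0) ↔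
      ∀ lam : ℂ, ‖lam‖ = 1 →
        (u + lam • v) * star (u + lam • v) * (u + lam • v) = u + lam • v := by
  -- star versions of the partial isometry identities
  have hu' : star u * u * star u = star u := by
    have := congrArg star hu
    simpa [mul_assoc] using this
  have hv' : star v * v * star v = star v := by
    have := congrArg star hv
    simpa [mul_assoc] using this
  -- the key expansion, valid for any unimodular scalar
  have key : ∀ lam : ℂ, lam * star lam = 1 →
      (u + lam • v) * star (u + lam • v) * (u + lam • v)
        = (u + lam • v)
          + (lam • (u * star u * v + v * star u * u)
            + (lam * lam) • (v * star u * v)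
            + (star lam) • (u * star v * u)
            + (u * star v * v + v * star v * u)) := by
    intro lam hlam
    have hlam' : star lam * lam = 1 := by rw [mul_comm]; exact hlam
    simp only [starRingEnd_apply, star_add, star_smul, mul_add, add_mul, smul_add,
      smul_mul_assoc, mul_smul_comm, smul_smul, hlam, hlam', one_smul, hu, hv]
    module
  have hnorm_mul : ∀ lam : ℂ, ‖lam‖ = 1 → lam * star lam = 1 := by
    intro lam h
    rw [RCLike.star_def, Complex.mul_conj]
    norm_cast
    simp [Complex.normSq_eq_norm_sq, h]
  constructor
  · rintro ⟨h1, h2⟩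
    have h3 : v * star u = 0 := by simpa using congrArg star h2
    have h4 : star v * u = 0 := by simpa using congrArg star h1
    intro lam hn
    rw [key lam (hnorm_mul lam hn)]
    have e1 : u * star u * v = 0 := by rw [mul_assoc, h1, mul_zero]
    have e2 : v * star u * u = 0 := by rw [h3, zero_mul]
    have e3 : v * star u * v = 0 := by rw [h3, zero_mul]
    have e4 : u * star v * u = 0 := by rw [h2, zero_mul]
    have e5 : u * star v * v = 0 := by rw [h2, zero_mul]
    have e6 : v * star v * u = 0 := by rw [mul_assoc, h4, mul_zero]
    simp [e1, e2, e3, e4, e5, e6]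
  · intro h
    have E : ∀ lam : ℂ, ‖lam‖ = 1 →
        lam • (u * star u * v + v * star u * u)
          + (lam * lam) • (v * star u * v)
          + (star lam) • (u * star v * u)
          + (u * star v * v + v * star v * u) = 0 := by
      intro lam hn
      have := (key lam (hnorm_mul lam hn)).symm.trans (h lam hn)
      exact add_eq_left.mp this
    have g1 := E 1 (by simp)
    have g2 := E (-1) (by simp)
    have g3 := E I (by simp)
    have g4 := E (-I) (by simp)
    simp only [RCLike.star_def, map_one, map_neg, Complex.conj_I, neg_mul_neg,
      Complex.I_mul_I, one_smul, one_mul] at g1 g2 g3 g4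
    have ha : u * star u * v + v * star u * u = 0 := by
      have h4a : (4:ℂ) • (u * star u * v + v * star u * u) = 0 := by
        linear_combination (norm := match_scalars <;> (simp [Complex.I_sq]; try ring))
          g1 - g2 - I • g3 + I • g4
      rcases smul_eq_zero.mp h4a with hz | hz
      · exact absurd hz (by norm_num)
      · exact hz
    have hd : u * star v * v + v * star v * u = 0 := by
      have h4d : (4:ℂ) • (u * star v * v + v * star v * u) = 0 := by
        linear_combination (norm := match_scalars <;> (simp [Complex.I_sq]; try ring))
          g1 + g2 + g3 + g4
      rcases smul_eq_zero.mp h4d with hz | hz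
      · exact absurd hz (by norm_num)
      · exact hz
    -- idempotents
    have hp : (star u * u) * (star u * u) = star u * u := by
      calc (star u * u) * (star u * u) = star u * (u * star u * u) := by noncomm_ring
        _ = star u * u := by rw [hu]
    have hq : (v * star v) * (v * star v) = v * star v := by
      calc (v * star v) * (v * star v) = (v * star v * v) * star v := by noncomm_ring
        _ = v * star v := by rw [hv]
    constructor
    · -- from `ha` deduce `star u * v = 0`
      have t1 : star u * v + star u * v * (star u * u) = 0 := by
        calc star u * v + star u * v * (star u * u)
            = star u * u * star u * v + star u * v * (star u * u) := by rw [hu']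
          _ = star u * (u * star u * v + v * star u * u) := by noncomm_ring
          _ = 0 := by rw [ha, mul_zero]
      have t2 : star u * v * (star u * u) = 0 := by
        have h2t : (2:ℂ) • (star u * v * (star u * u)) = 0 := by
          rw [two_smul]
          calc star u * v * (star u * u) + star u * v * (star u * u)
              = (star u * v + star u * v * (star u * u)) * (star u * u) := by
                rw [add_mul, mul_assoc (star u * v) (star u * u) (star u * u), hp]
            _ = 0 := by rw [t1, zero_mul]
        rcases smul_eq_zero.mp h2t with hz | hz
        · exact absurd hz (by norm_num)
        · exact hz
      have := t1
      rw [t2, add_zero] at this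
      exact this
    · -- from `hd` deduce `u * star v = 0`
      have t1 : u * star v + (v * star v) * (u * star v) = 0 := by
        calc u * star v + (v * star v) * (u * star v)
            = u * (star v * v * star v) + (v * star v) * (u * star v) := by rw [hv']
          _ = (u * star v * v + v * star v * u) * star v := by noncomm_ring
          _ = 0 := by rw [hd, zero_mul]
      have t2 : (v * star v) * (u * star v) = 0 := by
        have h2t : (2:ℂ) • ((v * star v) * (u * star v)) = 0 := by
          rw [two_smul]
          calc (v * star v) * (u * star v) + (v * star v) * (u * star v)
              = (v * star v) * (u * star v + (v * star v) * (u * star v)) := by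
                rw [mul_add, ← mul_assoc (v * star v) (v * star v) (u * star v), hq]
            _ = 0 := by rw [t1, mul_zero]
        rcases smul_eq_zero.mp h2t with hz | hz
        · exact absurd hz (by norm_num)
        · exact hz
      have := t1
      rw [t2, add_zero] at this
      exact this
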